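/- Let F be an imaginary quadratic field with ring of integers 𝒪_F, let 𝔟 ⊆ 𝒪_F be a nonzero ideal, and let ℓ be a prime number. Then there exists a nonzero element c ∈ 𝔟 such that the quotient group 𝔟/c𝒪_F is finite of order not divisible by ℓ. -/

import Mathlib

open NumberField

set_option maxHeartbeats 2000000 in
set_option synthInstance.maxHeartbeats 400000 in
open UniqueFactorizationMonoid in
/-- **Lemma of Section 11.** Let `F` be an imaginary quadratic field with ring of integers
`𝒪_F`, let `𝔟 ⊆ 𝒪_F` be a nonzero ideal, and let `ℓ` be a prime number. Then there exists a
nonzero element `c ∈ 𝔟` such that the quotient group `𝔟/c𝒪_F` is finite of order not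
divisible by `ℓ`. -/
theorem exists_gen_of_index_coprime
    (F : Type*) [Field F] [NumberField F]
    (hquad : Module.finrank ℚ F = 2)
    (himag : ∀ v : InfinitePlace F, v.IsComplex)
    (𝔟 : Ideal (𝓞 F)) (h𝔟 : 𝔟 ≠ ⊥)
    (ℓ : ℕ) (hℓ : ℓ.Prime) :
    ∃ c ∈ 𝔟, c ≠ 0 ∧
      Finite (𝔟 ⧸ (Submodule.comap 𝔟.subtype (Ideal.span {c}))) ∧
      ¬ (ℓ ∣ Nat.card (𝔟 ⧸ (Submodule.comap 𝔟.subtype (Ideal.span {c})))) := by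
  classical
  set L : Ideal (𝓞 F) := Ideal.span {(ℓ : (𝓞 F))} with hLdef
  have hℓR : (ℓ : (𝓞 F)) ≠ 0 := Nat.cast_ne_zero.mpr hℓ.ne_zero
  have hL0 : L ≠ ⊥ := by
    simpa [hLdef, Ideal.span_singleton_eq_bot] using hℓR
  have hL1 : L ≠ ⊤ := by
    intro h
    have hu : IsUnit ((ℓ : (𝓞 F))) := Ideal.span_singleton_eq_top.mp h
    have hu2 : IsUnit (Algebra.norm ℤ ((ℓ : (𝓞 F)))) := hu.map (Algebra.norm ℤ)
    have hnorm : Algebra.norm ℤ ((ℓ : (𝓞 F)))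
        = (ℓ : ℤ) ^ Fintype.card (Module.Free.ChooseBasisIndex ℤ (𝓞 F)) := by
      rw [show ((ℓ : (𝓞 F))) = algebraMap ℤ (𝓞 F) (ℓ : ℤ) by simp,
        Algebra.norm_algebraMap_of_basis (Module.Free.chooseBasis ℤ (𝓞 F))]
    rw [hnorm] at hu2
    have hu3 : IsUnit ((ℓ : ℤ)) :=
      (isUnit_pow_iff Fintype.card_pos.ne').mp hu2
    have h2 := hℓ.two_le
    rcases Int.isUnit_iff.mp hu3 with h1 | h1 <;> omega
  have h𝔟0 : 𝔟 ≠ 0 := by simpa [Ideal.zero_eq_bot] using h𝔟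
  have hL0' : L ≠ 0 := by simpa [Ideal.zero_eq_bot] using hL0
  have h𝔟L : 𝔟 * L ≠ 0 := mul_ne_zero h𝔟0 hL0'
  -- the finite set of primes dividing `𝔟 * L`
  set s : Finset (Ideal (𝓞 F)) := (normalizedFactors (𝔟 * L)).toFinset with hsdef
  set n : Ideal (𝓞 F) → ℕ := fun P => (normalizedFactors 𝔟).count P with hndef
  have hs : ∀ P ∈ s, Prime P := fun P hP =>
    prime_of_normalized_factor P (Multiset.mem_toFinset.mp hP)
  have hsbot : ∀ P ∈ s, P ≠ ⊥ := by
    intro P hP h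
    have hd : P ∣ 𝔟 * L := dvd_of_mem_normalizedFactors (Multiset.mem_toFinset.mp hP)
    rw [h] at hd
    have hd' : (0 : Ideal (𝓞 F)) ∣ 𝔟 * L := by rw [Ideal.zero_eq_bot]; exact hd
    exact h𝔟L (zero_dvd_iff.mp hd')
  have hstop : ∀ P ∈ s, P ≠ ⊤ := by
    intro P hP h
    exact (hs P hP).not_unit (Ideal.isUnit_iff.mpr h)
  -- choose elements of exact valuation `n P` at each `P ∈ s`
  choose x hx1 hx2 using fun i : s =>
    Ideal.exists_mem_pow_notMem_pow_succ i.1 (hsbot i.1 i.2) (hstop i.1 i.2) (n i.1)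
  obtain ⟨c, hc⟩ := IsDedekindDomain.exists_forall_sub_mem_ideal (R := (𝓞 F)) (s := s) id
    (fun P => n P + 1) (fun i hi => hs i hi) (fun i _ j _ hij => hij) x
  have hkey : ∀ P (hP : P ∈ s), c ∈ P ^ n P ∧ c ∉ P ^ (n P + 1) := by
    intro P hP
    have h3 := hc P hP
    simp only [id] at h3
    constructor
    · have : c = (c - x ⟨P, hP⟩) + x ⟨P, hP⟩ := by ring
      rw [this]
      exact add_mem (Ideal.pow_le_pow_right (Nat.le_succ _) h3) (hx1 ⟨P, hP⟩)
    · intro hcmem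
      refine hx2 ⟨P, hP⟩ ?_
      have : x ⟨P, hP⟩ = c - (c - x ⟨P, hP⟩) := by ring
      rw [this]
      exact sub_mem hcmem h3
  -- `s` is nonempty, hence `c ≠ 0`
  obtain ⟨q, hq⟩ : ∃ q, q ∈ normalizedFactors (𝔟 * L) := by
    have hnu : ¬IsUnit (𝔟 * L) := by
      intro h
      exact hL1 (top_le_iff.mp (le_trans (le_of_eq (Ideal.isUnit_iff.mp h).symm) Ideal.mul_le_right))
    exact exists_mem_normalizedFactors h𝔟L hnu
  have hqs : q ∈ s := Multiset.mem_toFinset.mpr hq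
  have hc0 : c ≠ 0 := by
    intro h
    exact (hkey q hqs).2 (h ▸ zero_mem _)
  have hspan0 : Ideal.span {c} ≠ (0 : Ideal (𝓞 F)) := by
    simpa [Ideal.zero_eq_bot, Ideal.span_singleton_eq_bot] using hc0
  -- counting normalized factors of `span {c}`
  have hcount : ∀ P (hP : P ∈ s), (normalizedFactors (Ideal.span {c})).count P = n P := by
    intro P hP
    haveI : P.IsPrime := Ideal.isPrime_of_prime (hs P hP)
    exact Ideal.count_normalizedFactors_eq
      ((Ideal.span_singleton_le_iff_mem _).mpr (hkey P hP).1)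
      (fun h => (hkey P hP).2 ((Ideal.span_singleton_le_iff_mem _).mp h))
  have hnf_mul : normalizedFactors (𝔟 * L) = normalizedFactors 𝔟 + normalizedFactors L :=
    normalizedFactors_mul h𝔟0 hL0'
  -- `𝔟 ∣ span {c}`
  have hdvd : 𝔟 ∣ Ideal.span {c} := by
    rw [dvd_iff_normalizedFactors_le_normalizedFactors h𝔟0 hspan0, Multiset.le_iff_count]
    intro P
    by_cases hP : P ∈ normalizedFactors 𝔟
    · have hPs : P ∈ s := by
        rw [hsdef, Multiset.mem_toFinset, hnf_mul]
        exact Multiset.mem_add.mpr (Or.inl hP)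
      rw [hcount P hPs]
    · simp [Multiset.count_eq_zero_of_notMem hP]
  obtain ⟨𝔞, h𝔞⟩ := hdvd
  have h𝔞0 : 𝔞 ≠ 0 := by
    intro h
    rw [h, mul_zero] at h𝔞
    exact hspan0 h𝔞
  have hc𝔟 : c ∈ 𝔟 :=
    (Ideal.le_of_dvd ⟨𝔞, h𝔞⟩) (Ideal.mem_span_singleton_self c)
  -- `𝔞` is coprime to `L`
  have hcop : IsCoprime 𝔞 L := by
    refine Ideal.coprime_of_no_prime_ge ?_
    intro P hP𝔞 hPL hPprime
    have hPdvdL : P ∣ L := Ideal.dvd_iff_le.mpr hPL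
    have hP0 : P ≠ ⊥ := by
      intro h
      rw [h] at hPdvdL
      have hd' : (0 : Ideal (𝓞 F)) ∣ L := by rw [Ideal.zero_eq_bot]; exact hPdvdL
      exact hL0' (zero_dvd_iff.mp hd')
    have hPprime' : Prime P := Ideal.prime_of_isPrime hP0 hPprime
    have hPs : P ∈ s := by
      rw [hsdef, Multiset.mem_toFinset, mem_normalizedFactors_iff h𝔟L]
      exact ⟨hPprime', hPdvdL.mul_left 𝔟⟩
    have h1 : (normalizedFactors (Ideal.span {c})).count P
        = (normalizedFactors 𝔟).count P + (normalizedFactors 𝔞).count P := by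
      rw [h𝔞, normalizedFactors_mul h𝔟0 h𝔞0, Multiset.count_add]
    have h2 := hcount P hPs
    have h3 : (normalizedFactors 𝔞).count P = 0 := by
      rw [h1] at h2
      simp only [hndef] at h2
      omega
    have hP𝔞' : P ∈ normalizedFactors 𝔞 := by
      rw [mem_normalizedFactors_iff h𝔞0]
      exact ⟨hPprime', Ideal.dvd_iff_le.mpr hP𝔞⟩
    rw [Multiset.count_eq_zero] at h3
    exact h3 hP𝔞'
  -- set up the quotient
  set N : Submodule (𝓞 F) 𝔟 := Submodule.comap 𝔟.subtype (Ideal.span {c}) with hNdef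
  set φ : 𝔟 →ₗ[(𝓞 F)] (𝓞 F) ⧸ Ideal.span {c} := (Ideal.span {c}).mkQ.comp 𝔟.subtype with hφdef
  have hker : LinearMap.ker φ = N := by
    rw [hφdef, LinearMap.ker_comp, Submodule.ker_mkQ]
  haveI : Fintype ((𝓞 F) ⧸ Ideal.span {c}) :=
    @Fintype.ofFinite _ (Ideal.finiteQuotientOfFreeOfNeBot _ (by simpa [Ideal.zero_eq_bot] using hspan0))
  have e : (𝔟 ⧸ N) ≃ₗ[(𝓞 F)] LinearMap.range φ :=
    (Submodule.quotEquivOfEq N (LinearMap.ker φ) hker.symm).trans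
      (LinearMap.quotKerEquivRange φ)
  haveI hfin : Finite (𝔟 ⧸ N) := Finite.of_equiv _ e.toEquiv.symm
  refine ⟨c, hc𝔟, hc0, hfin, ?_⟩
  -- no ℓ-torsion in the quotient
  intro hdvdcard
  haveI : Fintype (𝔟 ⧸ N) := Fintype.ofFinite _
  rw [Nat.card_eq_fintype_card] at hdvdcard
  haveI : Fact ℓ.Prime := ⟨hℓ⟩
  obtain ⟨g, hg⟩ := exists_prime_addOrderOf_dvd_card ℓ hdvdcard
  obtain ⟨a, ha𝔞, t, htL, hat⟩ := Ideal.isCoprime_iff_exists.mp hcop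
  obtain ⟨u, hu⟩ := Ideal.mem_span_singleton'.mp htL
  have hann : a • g = 0 := by
    obtain ⟨⟨b, hb⟩, rfl⟩ := Submodule.Quotient.mk_surjective N g
    rw [← Submodule.Quotient.mk_smul, Submodule.Quotient.mk_eq_zero]
    rw [hNdef, Submodule.mem_comap]
    show a • b ∈ Ideal.span {c}
    rw [smul_eq_mul, h𝔞, mul_comm a b]
    exact Ideal.mul_mem_mul hb ha𝔞
  have hgz : g = 0 := by
    calc g = (1 : (𝓞 F)) • g := (one_smul _ _).symm
    _ = (a + t) • g := by rw [hat]
    _ = a • g + t • g := add_smul _ _ _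
    _ = t • g := by rw [hann, zero_add]
    _ = u • ((ℓ : (𝓞 F)) • g) := by rw [← mul_smul, hu]
    _ = u • ((ℓ : ℕ) • g) := by rw [Nat.cast_smul_eq_nsmul]
    _ = u • ((addOrderOf g) • g) := by rw [hg]
    _ = 0 := by rw [addOrderOf_nsmul_eq_zero, smul_zero]
  rw [hgz, addOrderOf_zero] at hg
  exact hℓ.ne_one hg.symm
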